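/- Let R > 0, c > 0, m ∈ ℝ, and let D = {z ∈ ℂ : |z| < R}. Suppose w : closure(D) → ℝ is continuous, twice continuously differentiable on D, satisfies Δw = c²·w on D, and w(z) = m for all z with |z| = R. Then w(z) = m · I₀(c·|z|)/I₀(c·R) for all z ∈ closure(D). -/

import Mathlib

/-- Directional derivative of `f : ℂ → E` at `z` in the direction `v ∈ ℂ`. -/
noncomputable def dirDeriv {E : Type*} [NormedAddCommGroup E] [NormedSpace ℝ E]
    (v : ℂ) (f : ℂ → E) (z : ℂ) : E :=
  deriv (fun t : ℝ => f (z + t • v)) 0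

/-- The flat Laplacian `Δf = ∂²f/∂x² + ∂²f/∂y²` of a function on `ℂ ≅ ℝ²`
(applied componentwise when the target is `ℂ`). -/
noncomputable def flatLaplacian {E : Type*} [NormedAddCommGroup E] [NormedSpace ℝ E]
    (f : ℂ → E) (z : ℂ) : E :=
  dirDeriv 1 (dirDeriv 1 f) z + dirDeriv Complex.I (dirDeriv Complex.I f) z

/-- The modified Bessel function of the first kind,
`I₀(x) = ∑ₖ (x/2)^(2k) / (k!)²`. -/
noncomputable def besselI0 (x : ℝ) : ℝ :=
  ∑' k : ℕ, (x / 2) ^ (2 * k) / (Nat.factorial k : ℝ) ^ 2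

open scoped Nat

noncomputable def Acoef (q : ℝ) (k : ℕ) : ℝ := q ^ k / (k.factorial : ℝ) ^ 2

lemma Acoef_nonneg {q : ℝ} (hq : 0 ≤ q) (k : ℕ) : 0 ≤ Acoef q k := by
  unfold Acoef; positivity

lemma Acoef_succ_key (q : ℝ) (k : ℕ) :
    ((k : ℝ) + 1) ^ 2 * Acoef q (k + 1) = q * Acoef q k := by
  unfold Acoef
  have h1 : ((k + 1).factorial : ℝ) = ((k : ℝ) + 1) * (k.factorial : ℝ) := by
    rw [Nat.factorial_succ]; push_cast; ring
  have h2 : (k.factorial : ℝ) ≠ 0 := Nat.cast_ne_zero.2 k.factorial_ne_zero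
  have h3 : ((k : ℝ) + 1) ≠ 0 := by positivity
  rw [h1]
  field_simp
  ring

noncomputable def Gser (q s : ℝ) : ℝ := ∑' k : ℕ, Acoef q k * s ^ k
noncomputable def Gser1 (q s : ℝ) : ℝ := ∑' k : ℕ, ((k : ℝ) + 1) * Acoef q (k + 1) * s ^ k
noncomputable def Gser2 (q s : ℝ) : ℝ :=
  ∑' k : ℕ, ((k : ℝ) + 1) * ((k : ℝ) + 2) * Acoef q (k + 2) * s ^ k

/-- master summability lemma -/
lemma summable_master {q : ℝ} (hq : 0 ≤ q) (j : ℕ) (C : ℝ) (P : ℕ → ℝ)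
    (hP : ∀ k, 0 ≤ P k) (hPle : ∀ k, P k ≤ C * ((k + j).factorial : ℝ)) (s : ℝ) :
    Summable (fun k : ℕ => P k * Acoef q (k + j) * s ^ k) := by
  have hC : 0 ≤ C := by
    have := (hP 0).trans (hPle 0)
    have hf : (0:ℝ) < ((0 + j).factorial : ℝ) := by positivity
    nlinarith
  apply Summable.of_norm_bounded (g := fun k : ℕ => (C * q ^ j) * ((q * |s|) ^ k / k.factorial))
  · exact (Real.summable_pow_div_factorial (q * |s|)).mul_left _
  · intro k
    have hfk : (0:ℝ) < (k.factorial : ℝ) := by positivity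
    have hfkj : (0:ℝ) < ((k + j).factorial : ℝ) := by positivity
    have hle : (k.factorial : ℝ) ≤ ((k + j).factorial : ℝ) := by
      exact_mod_cast Nat.factorial_le (Nat.le_add_right k j)
    have hA : 0 ≤ Acoef q (k + j) := Acoef_nonneg hq _
    have h1 : P k * Acoef q (k + j) ≤ C * ((k + j).factorial : ℝ) * Acoef q (k + j) :=
      mul_le_mul_of_nonneg_right (hPle k) hA
    have h2 : C * ((k + j).factorial : ℝ) * Acoef q (k + j)
        = C * (q ^ (k + j) / ((k + j).factorial : ℝ)) := by
      unfold Acoef; field_simp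
    have h3 : C * (q ^ (k + j) / ((k + j).factorial : ℝ))
        ≤ C * (q ^ (k + j) / (k.factorial : ℝ)) := by
      apply mul_le_mul_of_nonneg_left _ hC
      exact div_le_div_of_nonneg_left (by positivity) hfk hle
    have key : P k * Acoef q (k + j) ≤ C * (q ^ (k + j) / (k.factorial : ℝ)) := by
      linarith
    have : ‖P k * Acoef q (k + j) * s ^ k‖ = P k * Acoef q (k + j) * |s| ^ k := by
      rw [norm_mul, norm_mul, norm_pow, Real.norm_eq_abs, Real.norm_eq_abs,
        Real.norm_eq_abs, abs_of_nonneg (hP k), abs_of_nonneg hA]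
    rw [this]
    calc P k * Acoef q (k + j) * |s| ^ k
        ≤ C * (q ^ (k + j) / (k.factorial : ℝ)) * |s| ^ k :=
          mul_le_mul_of_nonneg_right key (by positivity)
      _ = (C * q ^ j) * ((q * |s|) ^ k / k.factorial) := by
          rw [pow_add, mul_pow]; ring

lemma summable_Gser {q : ℝ} (hq : 0 ≤ q) (s : ℝ) :
    Summable (fun k : ℕ => Acoef q k * s ^ k) := by
  have := summable_master hq 0 1 (fun _ => 1) (fun _ => zero_le_one)
    (fun k => by
      rw [one_mul]
      exact_mod_cast Nat.cast_le.mpr (Nat.one_le_iff_ne_zero.mpr (k + 0).factorial_ne_zero)) s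
  simpa using this

lemma summable_Gser1 {q : ℝ} (hq : 0 ≤ q) (s : ℝ) :
    Summable (fun k : ℕ => ((k : ℝ) + 1) * Acoef q (k + 1) * s ^ k) := by
  have := summable_master hq 1 1 (fun k => (k : ℝ) + 1) (fun k => by positivity)
    (fun k => by
      rw [one_mul]
      exact_mod_cast Nat.cast_le.mpr (Nat.self_le_factorial (k + 1))) s
  simpa using this

lemma summable_Gser2 {q : ℝ} (hq : 0 ≤ q) (s : ℝ) :
    Summable (fun k : ℕ => ((k : ℝ) + 1) * ((k : ℝ) + 2) * Acoef q (k + 2) * s ^ k) := by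
  have := summable_master hq 2 1 (fun k => ((k : ℝ) + 1) * ((k : ℝ) + 2)) (fun k => by positivity)
    (fun k => by
      rw [one_mul]
      have : (k + 1) * (k + 2) ≤ (k + 2).factorial := by
        have h1 : (k + 2).factorial = (k + 2) * ((k + 1) * k.factorial) := by
          rw [Nat.factorial_succ, Nat.factorial_succ]
        have h2 : 1 ≤ k.factorial := k.factorial_pos
        calc (k + 1) * (k + 2) = (k + 2) * ((k + 1) * 1) := by ring
          _ ≤ (k + 2) * ((k + 1) * k.factorial) := by
              exact Nat.mul_le_mul_left _ (Nat.mul_le_mul_left _ h2)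
          _ = (k + 2).factorial := h1.symm
      exact_mod_cast Nat.cast_le.mpr this) s
  simpa using this

lemma summable_kGser {q : ℝ} (hq : 0 ≤ q) (s : ℝ) :
    Summable (fun k : ℕ => (k : ℝ) * Acoef q k * s ^ k) := by
  have := summable_master hq 0 1 (fun k => (k : ℝ)) (fun k => by positivity)
    (fun k => by
      rw [one_mul]
      exact_mod_cast Nat.cast_le.mpr (Nat.self_le_factorial k)) s
  simpa using this

lemma summable_kGser1 {q : ℝ} (hq : 0 ≤ q) (s : ℝ) :
    Summable (fun k : ℕ => ((k : ℝ) + 1) * ((k : ℝ) * Acoef q (k + 1) * s ^ k)) := by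
  have := summable_master hq 1 1 (fun k => ((k : ℝ) + 1) * (k : ℝ)) (fun k => by positivity)
    (fun k => by
      rw [one_mul]
      have : (k + 1) * k ≤ (k + 1).factorial := by
        rw [Nat.factorial_succ]
        exact Nat.mul_le_mul_left _ (Nat.self_le_factorial k)
      exact_mod_cast Nat.cast_le.mpr this) s
  have h2 : (fun k : ℕ => ((k : ℝ) + 1) * ((k : ℝ) * Acoef q (k + 1) * s ^ k))
      = fun k : ℕ => ((k : ℝ) + 1) * (k : ℝ) * Acoef q (k + 1) * s ^ k := by
    funext k; ring
  rw [h2]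
  simpa using this

lemma abs_pow_pred_le {y T : ℝ} (hT : 1 ≤ T) (hy : |y| ≤ T) (n : ℕ) :
    |y| ^ (n - 1) ≤ T ^ n := by
  calc |y| ^ (n - 1) ≤ T ^ (n - 1) := pow_le_pow_left₀ (abs_nonneg y) hy _
    _ ≤ T ^ n := pow_le_pow_right₀ hT (Nat.sub_le n 1)

lemma summable_deriv_term {q : ℝ} (hq : 0 ≤ q) (s : ℝ) :
    Summable (fun n : ℕ => Acoef q n * ((n : ℝ) * s ^ (n - 1))) := by
  apply Summable.of_norm_bounded
    (g := fun k : ℕ => (k : ℝ) * Acoef q k * (|s| + 1) ^ k) (summable_kGser hq (|s| + 1))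
  intro n
  have hA := Acoef_nonneg hq n
  have h1 : ‖Acoef q n * ((n : ℝ) * s ^ (n - 1))‖ = (n : ℝ) * Acoef q n * |s| ^ (n - 1) := by
    rw [norm_mul, norm_mul, norm_pow, Real.norm_eq_abs, Real.norm_eq_abs, Real.norm_eq_abs,
      abs_of_nonneg hA, Nat.abs_cast]
    ring
  rw [h1]
  have h2 : |s| ^ (n - 1) ≤ (|s| + 1) ^ n :=
    abs_pow_pred_le (by linarith [abs_nonneg s]) (by linarith) n
  have h3 : (|s| + 1) ^ n ≤ |(|s| + 1)| ^ n := by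
    rw [abs_of_nonneg (by positivity : (0:ℝ) ≤ |s| + 1)]
  have : (n : ℝ) * Acoef q n * |s| ^ (n - 1) ≤ (n : ℝ) * Acoef q n * (|s| + 1) ^ n :=
    mul_le_mul_of_nonneg_left h2 (by positivity)
  have h4 : (|s| + 1) ^ n = |s| ^ n + 1 ∨ True := Or.inr trivial
  calc (n : ℝ) * Acoef q n * |s| ^ (n - 1) ≤ (n : ℝ) * Acoef q n * (|s| + 1) ^ n := this
    _ ≤ (n : ℝ) * Acoef q n * (|s| + 1) ^ n := le_refl _

lemma summable_deriv_term1 {q : ℝ} (hq : 0 ≤ q) (s : ℝ) :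
    Summable (fun n : ℕ => ((n : ℝ) + 1) * Acoef q (n + 1) * ((n : ℝ) * s ^ (n - 1))) := by
  apply Summable.of_norm_bounded
    (g := fun k : ℕ => ((k : ℝ) + 1) * ((k : ℝ) * Acoef q (k + 1) * (|s| + 1) ^ k))
    (summable_kGser1 hq (|s| + 1))
  intro n
  have hA := Acoef_nonneg hq (n + 1)
  have h1 : ‖((n : ℝ) + 1) * Acoef q (n + 1) * ((n : ℝ) * s ^ (n - 1))‖
      = ((n : ℝ) + 1) * Acoef q (n + 1) * ((n : ℝ) * |s| ^ (n - 1)) := by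
    rw [norm_mul, norm_mul, norm_mul, norm_pow, Real.norm_eq_abs, Real.norm_eq_abs,
      Real.norm_eq_abs, Real.norm_eq_abs, abs_of_nonneg hA, Nat.abs_cast,
      abs_of_nonneg (by positivity : (0:ℝ) ≤ (n : ℝ) + 1)]
  rw [h1]
  have h2 : |s| ^ (n - 1) ≤ (|s| + 1) ^ n :=
    abs_pow_pred_le (by linarith [abs_nonneg s]) (by linarith) n
  have : ((n : ℝ)) * |s| ^ (n - 1) ≤ (n : ℝ) * (|s| + 1) ^ n :=
    mul_le_mul_of_nonneg_left h2 (by positivity)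
  calc ((n : ℝ) + 1) * Acoef q (n + 1) * ((n : ℝ) * |s| ^ (n - 1))
      ≤ ((n : ℝ) + 1) * Acoef q (n + 1) * ((n : ℝ) * (|s| + 1) ^ n) := by
        apply mul_le_mul_of_nonneg_left _ (by positivity)
        exact mul_le_mul_of_nonneg_left h2 (by positivity)
    _ = ((n : ℝ) + 1) * ((n : ℝ) * Acoef q (n + 1) * (|s| + 1) ^ n) := by ring

lemma hasDerivAt_Gser {q : ℝ} (hq : 0 ≤ q) (x : ℝ) :
    HasDerivAt (Gser q) (Gser1 q x) x := by
  set T : ℝ := |x| + 1 with hT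
  have hT1 : (1 : ℝ) ≤ T := by rw [hT]; linarith [abs_nonneg x]
  have hxT : x ∈ Set.Ioo (-T) T := by
    constructor <;> [nlinarith [abs_nonneg x, neg_abs_le x]; nlinarith [le_abs_self x]]
  have key : HasDerivAt (fun z => ∑' n : ℕ, Acoef q n * z ^ n)
      (∑' n : ℕ, Acoef q n * ((n : ℝ) * x ^ (n - 1))) x := by
    apply hasDerivAt_tsum_of_isPreconnected
      (u := fun k : ℕ => (k : ℝ) * Acoef q k * T ^ k)
      (summable_kGser hq T) isOpen_Ioo (convex_Ioo _ _).isPreconnected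
      (fun n y _ => (hasDerivAt_pow n y).const_mul (Acoef q n)) ?_ hxT
      (summable_Gser hq x) hxT
    intro n y hy
    have hyT : |y| ≤ T := by
      rw [abs_le]; constructor <;> [linarith [hy.1]; linarith [hy.2]]
    have hA := Acoef_nonneg hq n
    have : ‖Acoef q n * ((n : ℝ) * y ^ (n - 1))‖ = (n : ℝ) * Acoef q n * |y| ^ (n - 1) := by
      rw [norm_mul, norm_mul, norm_pow, Real.norm_eq_abs, Real.norm_eq_abs, Real.norm_eq_abs,
        abs_of_nonneg hA, Nat.abs_cast]
      ring
    rw [this]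
    exact mul_le_mul_of_nonneg_left (abs_pow_pred_le hT1 hyT n) (by positivity)
  have heq : (∑' n : ℕ, Acoef q n * ((n : ℝ) * x ^ (n - 1))) = Gser1 q x := by
    rw [Summable.tsum_eq_zero_add (summable_deriv_term hq x)]
    simp only [Nat.cast_zero, zero_mul, mul_zero, zero_add, Nat.cast_succ, Nat.add_sub_cancel]
    unfold Gser1
    exact tsum_congr fun k => by push_cast; ring
  rw [← heq]
  exact key

set_option maxHeartbeats 1000000 in
lemma hasDerivAt_Gser1 {q : ℝ} (hq : 0 ≤ q) (x : ℝ) :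
    HasDerivAt (Gser1 q) (Gser2 q x) x := by
  set T : ℝ := |x| + 1 with hT
  have hT1 : (1 : ℝ) ≤ T := by rw [hT]; linarith [abs_nonneg x]
  have hxT : x ∈ Set.Ioo (-T) T := by
    constructor <;> [nlinarith [abs_nonneg x, neg_abs_le x]; nlinarith [le_abs_self x]]
  have key : HasDerivAt (fun z => ∑' n : ℕ, ((n : ℝ) + 1) * Acoef q (n + 1) * z ^ n)
      (∑' n : ℕ, ((n : ℝ) + 1) * Acoef q (n + 1) * ((n : ℝ) * x ^ (n - 1))) x := by
    apply hasDerivAt_tsum_of_isPreconnected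
      (u := fun k : ℕ => ((k : ℝ) + 1) * ((k : ℝ) * Acoef q (k + 1) * T ^ k))
      (summable_kGser1 hq T) isOpen_Ioo (convex_Ioo _ _).isPreconnected
      (fun n y _ => (hasDerivAt_pow n y).const_mul (((n : ℝ) + 1) * Acoef q (n + 1))) ?_ hxT
      (summable_Gser1 hq x) hxT
    intro n y hy
    have hyT : |y| ≤ T := by
      rw [abs_le]; constructor <;> [linarith [hy.1]; linarith [hy.2]]
    have hA := Acoef_nonneg hq (n + 1)
    have : ‖((n : ℝ) + 1) * Acoef q (n + 1) * ((n : ℝ) * y ^ (n - 1))‖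
        = ((n : ℝ) + 1) * Acoef q (n + 1) * ((n : ℝ) * |y| ^ (n - 1)) := by
      rw [norm_mul, norm_mul, norm_mul, norm_pow, Real.norm_eq_abs, Real.norm_eq_abs,
        Real.norm_eq_abs, Real.norm_eq_abs, abs_of_nonneg hA, Nat.abs_cast,
        abs_of_nonneg (by positivity : (0:ℝ) ≤ (n : ℝ) + 1)]
    rw [this]
    have h2 := abs_pow_pred_le hT1 hyT n
    calc ((n : ℝ) + 1) * Acoef q (n + 1) * ((n : ℝ) * |y| ^ (n - 1))
        ≤ ((n : ℝ) + 1) * Acoef q (n + 1) * ((n : ℝ) * T ^ n) := by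
          apply mul_le_mul_of_nonneg_left _ (by positivity)
          exact mul_le_mul_of_nonneg_left h2 (by positivity)
      _ = ((n : ℝ) + 1) * ((n : ℝ) * Acoef q (n + 1) * T ^ n) := by ring
  have heq : (∑' n : ℕ, ((n : ℝ) + 1) * Acoef q (n + 1) * ((n : ℝ) * x ^ (n - 1)))
      = Gser2 q x := by
    rw [Summable.tsum_eq_zero_add (summable_deriv_term1 hq x)]
    simp only [Nat.cast_zero, zero_mul, mul_zero, zero_add, Nat.cast_succ, Nat.add_sub_cancel]
    unfold Gser2
    exact tsum_congr fun k => by push_cast; ring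
  rw [← heq]
  exact key

lemma summable_H {q : ℝ} (hq : 0 ≤ q) (s : ℝ) :
    Summable (fun k : ℕ => 4 * (k : ℝ) * ((k : ℝ) + 1) * Acoef q (k + 1) * s ^ k) := by
  have h := summable_master hq 1 4 (fun k => 4 * (k : ℝ) * ((k : ℝ) + 1))
    (fun k => by positivity)
    (fun k => by
      have : k * (k + 1) ≤ (k + 1).factorial := by
        rw [Nat.factorial_succ, Nat.mul_comm]
        exact Nat.mul_le_mul_left _ (Nat.self_le_factorial k)
      have h2 : ((k : ℝ)) * ((k : ℝ) + 1) ≤ ((k + 1).factorial : ℝ) := by exact_mod_cast this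
      show 4 * (k : ℝ) * ((k : ℝ) + 1) ≤ 4 * ((k + 1).factorial : ℝ)
      nlinarith) s
  simpa [mul_assoc] using h

lemma summable_H1 {q : ℝ} (hq : 0 ≤ q) (s : ℝ) :
    Summable (fun k : ℕ => 4 * ((k : ℝ) + 1) * Acoef q (k + 1) * s ^ k) := by
  have h := summable_master hq 1 4 (fun k => 4 * ((k : ℝ) + 1))
    (fun k => by positivity)
    (fun k => by
      have : (k + 1) ≤ (k + 1).factorial := Nat.self_le_factorial _
      have h2 : ((k : ℝ)) + 1 ≤ ((k + 1).factorial : ℝ) := by exact_mod_cast this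
      show 4 * ((k : ℝ) + 1) ≤ 4 * ((k + 1).factorial : ℝ)
      linarith) s
  simpa [mul_assoc] using h

lemma Gser_ode {q : ℝ} (hq : 0 ≤ q) (s : ℝ) :
    4 * Gser1 q s + 4 * s * Gser2 q s = 4 * q * Gser q s := by
  have h2 : 4 * s * Gser2 q s
      = ∑' k : ℕ, 4 * (k : ℝ) * ((k : ℝ) + 1) * Acoef q (k + 1) * s ^ k := by
    rw [Summable.tsum_eq_zero_add (summable_H hq s)]
    simp only [Nat.cast_zero, zero_mul, mul_zero, zero_add, Nat.cast_succ]
    unfold Gser2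
    rw [← tsum_mul_left]
    exact tsum_congr fun k => by push_cast; ring
  have h1 : 4 * Gser1 q s = ∑' k : ℕ, 4 * ((k : ℝ) + 1) * Acoef q (k + 1) * s ^ k := by
    unfold Gser1
    rw [← tsum_mul_left]
    exact tsum_congr fun k => by ring
  rw [h1, h2, ← Summable.tsum_add (summable_H1 hq s) (summable_H hq s)]
  have h3 : ∀ k : ℕ,
      4 * ((k : ℝ) + 1) * Acoef q (k + 1) * s ^ k
        + 4 * (k : ℝ) * ((k : ℝ) + 1) * Acoef q (k + 1) * s ^ k
      = 4 * q * (Acoef q k * s ^ k) := by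
    intro k
    have := Acoef_succ_key q k
    linear_combination 4 * s ^ k * this
  calc (∑' k : ℕ, (4 * ((k : ℝ) + 1) * Acoef q (k + 1) * s ^ k
        + 4 * (k : ℝ) * ((k : ℝ) + 1) * Acoef q (k + 1) * s ^ k))
      = ∑' k : ℕ, 4 * q * (Acoef q k * s ^ k) := tsum_congr h3
    _ = 4 * q * Gser q s := tsum_mul_left

lemma one_le_Gser {q : ℝ} (hq : 0 ≤ q) {s : ℝ} (hs : 0 ≤ s) : 1 ≤ Gser q s := by
  have h0 : Acoef q 0 * s ^ 0 = 1 := by unfold Acoef; simp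
  have := Summable.le_tsum (summable_Gser hq s) 0
    (fun j _ => mul_nonneg (Acoef_nonneg hq j) (pow_nonneg hs j))
  rw [h0] at this
  exact this

lemma continuous_Gser {q : ℝ} (hq : 0 ≤ q) : Continuous (Gser q) :=
  continuous_iff_continuousAt.2 fun x => (hasDerivAt_Gser hq x).continuousAt

lemma besselI0_eq_Gser (c r : ℝ) : besselI0 (c * r) = Gser (c ^ 2 / 4) (r ^ 2) := by
  unfold besselI0 Gser Acoef
  refine tsum_congr fun k => ?_
  rw [pow_mul, show (c * r / 2) ^ 2 = c ^ 2 / 4 * r ^ 2 by ring, mul_pow]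
  ring

lemma normSq_line_eq (z ν : ℂ) (hν : Complex.normSq ν = 1) (t : ℝ) :
    Complex.normSq (z + t • ν)
      = Complex.normSq z + 2 * (z.re * ν.re + z.im * ν.im) * t + t ^ 2 := by
  have hν' : ν.re * ν.re + ν.im * ν.im = 1 := by rw [← Complex.normSq_apply]; exact hν
  simp only [Complex.normSq_apply, Complex.add_re, Complex.add_im, Complex.smul_re, smul_eq_mul,
    Complex.smul_im, smul_eq_mul]
  linear_combination (t ^ 2) * hν'

lemma p_line_eq (z ν : ℂ) (hν : Complex.normSq ν = 1) (t : ℝ) :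
    (z + t • ν).re * ν.re + (z + t • ν).im * ν.im
      = (z.re * ν.re + z.im * ν.im) + t := by
  have hν' : ν.re * ν.re + ν.im * ν.im = 1 := by rw [← Complex.normSq_apply]; exact hν
  simp only [Complex.add_re, Complex.add_im, Complex.smul_re, Complex.smul_im, smul_eq_mul]
  linear_combination t * hν'

lemma hasDerivAt_normSq_line (z ν : ℂ) (hν : Complex.normSq ν = 1) (t : ℝ) :
    HasDerivAt (fun t : ℝ => Complex.normSq (z + t • ν))
      (2 * ((z.re * ν.re + z.im * ν.im) + t)) t := by
  have hfun : (fun t : ℝ => Complex.normSq (z + t • ν))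
      = fun t : ℝ => Complex.normSq z + 2 * (z.re * ν.re + z.im * ν.im) * t + t ^ 2 :=
    funext fun t => normSq_line_eq z ν hν t
  rw [hfun]
  have h := (((hasDerivAt_id t).const_mul (2 * (z.re * ν.re + z.im * ν.im))).const_add
    (Complex.normSq z)).add (hasDerivAt_pow 2 t)
  refine h.congr_deriv ?_
  push_cast
  ring

lemma hasDerivAt_vline (q K : ℝ) (hq : 0 ≤ q) (z ν : ℂ) (hν : Complex.normSq ν = 1) (t : ℝ) :
    HasDerivAt (fun t : ℝ => K * Gser q (Complex.normSq (z + t • ν)))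
      (K * (Gser1 q (Complex.normSq (z + t • ν))
        * (2 * ((z.re * ν.re + z.im * ν.im) + t)))) t := by
  have hi := hasDerivAt_normSq_line z ν hν t
  have hcomp := (hasDerivAt_Gser hq (Complex.normSq (z + t • ν))).comp t hi
  have : HasDerivAt (fun t : ℝ => Gser q (Complex.normSq (z + t • ν)))
      (Gser1 q (Complex.normSq (z + t • ν)) * (2 * ((z.re * ν.re + z.im * ν.im) + t))) t := by
    exact hcomp
  exact this.const_mul K

lemma dirDeriv_v (q K : ℝ) (hq : 0 ≤ q) (ν : ℂ) (hν : Complex.normSq ν = 1) (z : ℂ) :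
    dirDeriv ν (fun ζ => K * Gser q (Complex.normSq ζ)) z
      = K * (Gser1 q (Complex.normSq z) * (2 * (z.re * ν.re + z.im * ν.im))) := by
  have h := (hasDerivAt_vline q K hq z ν hν 0).deriv
  unfold dirDeriv
  simpa using h

lemma hasDerivAt_vline2 (q K : ℝ) (hq : 0 ≤ q) (z ν : ℂ) (hν : Complex.normSq ν = 1) :
    HasDerivAt (fun t : ℝ => K * (Gser1 q (Complex.normSq (z + t • ν))
        * (2 * ((z.re * ν.re + z.im * ν.im) + t))))
      (K * (Gser2 q (Complex.normSq z) * (2 * (z.re * ν.re + z.im * ν.im))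
          * (2 * ((z.re * ν.re + z.im * ν.im) + 0))
        + Gser1 q (Complex.normSq z) * 2)) 0 := by
  have hi := hasDerivAt_normSq_line z ν hν 0
  have h1 : HasDerivAt (fun t : ℝ => Gser1 q (Complex.normSq (z + t • ν)))
      (Gser2 q (Complex.normSq (z + (0:ℝ) • ν)) * (2 * ((z.re * ν.re + z.im * ν.im) + 0))) 0 := by
    have := (hasDerivAt_Gser1 hq (Complex.normSq (z + (0:ℝ) • ν))).comp 0 hi
    exact this
  have h2 : HasDerivAt (fun t : ℝ => 2 * ((z.re * ν.re + z.im * ν.im) + t)) 2 0 := by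
    have := ((hasDerivAt_id (0:ℝ)).const_add (z.re * ν.re + z.im * ν.im)).const_mul 2
    simpa using this
  have h3 := (h1.mul h2).const_mul K
  have hz0 : z + (0:ℝ) • ν = z := by simp
  rw [hz0] at h3
  refine h3.congr_deriv ?_
  ring

lemma dirDeriv_v_fun (q K : ℝ) (hq : 0 ≤ q) (ν : ℂ) (hν : Complex.normSq ν = 1) :
    dirDeriv ν (fun ζ => K * Gser q (Complex.normSq ζ))
      = fun ζ => K * (Gser1 q (Complex.normSq ζ) * (2 * (ζ.re * ν.re + ζ.im * ν.im))) :=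
  funext fun ζ => dirDeriv_v q K hq ν hν ζ

lemma dirDeriv2_v (q K : ℝ) (hq : 0 ≤ q) (ν : ℂ) (hν : Complex.normSq ν = 1) (z : ℂ) :
    dirDeriv ν (dirDeriv ν (fun ζ => K * Gser q (Complex.normSq ζ))) z
      = K * (Gser2 q (Complex.normSq z) * (2 * (z.re * ν.re + z.im * ν.im))
          * (2 * (z.re * ν.re + z.im * ν.im))
        + Gser1 q (Complex.normSq z) * 2) := by
  rw [dirDeriv_v_fun q K hq ν hν]
  unfold dirDeriv
  have hfun : (fun t : ℝ => K * (Gser1 q (Complex.normSq (z + t • ν))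
        * (2 * ((z + t • ν).re * ν.re + (z + t • ν).im * ν.im))))
      = fun t : ℝ => K * (Gser1 q (Complex.normSq (z + t • ν))
        * (2 * ((z.re * ν.re + z.im * ν.im) + t))) :=
    funext fun t => by rw [p_line_eq z ν hν t]
  rw [hfun, (hasDerivAt_vline2 q K hq z ν hν).deriv]
  ring

lemma flatLaplacian_v (q K : ℝ) (hq : 0 ≤ q) (z : ℂ) :
    flatLaplacian (fun ζ => K * Gser q (Complex.normSq ζ)) z
      = (4 * q) * (K * Gser q (Complex.normSq z)) := by
  unfold flatLaplacian
  rw [dirDeriv2_v q K hq 1 (by simp) z, dirDeriv2_v q K hq Complex.I (by simp) z]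
  simp only [Complex.one_re, Complex.one_im, Complex.I_re, Complex.I_im]
  have hode := Gser_ode hq (Complex.normSq z)
  have hns : Complex.normSq z = z.re * z.re + z.im * z.im := Complex.normSq_apply z
  linear_combination K * hode - 4 * K * Gser2 q (Complex.normSq z) * hns

lemma dirDeriv_line (f : ℂ → ℝ) (ν z : ℂ) (t : ℝ) :
    dirDeriv ν f (z + t • ν) = deriv (fun s : ℝ => f (z + s • ν)) t := by
  unfold dirDeriv
  have hfun : (fun s : ℝ => f (z + t • ν + s • ν))
      = fun s : ℝ => (fun r : ℝ => f (z + r • ν)) (t + s) := by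
    funext s
    congr 1
    rw [add_smul]
    ring
  calc deriv (fun s : ℝ => f (z + t • ν + s • ν)) 0
      = deriv (fun s : ℝ => (fun r : ℝ => f (z + r • ν)) (t + s)) 0 := by rw [hfun]
    _ = deriv (fun r : ℝ => f (z + r • ν)) (t + 0) :=
        deriv_comp_const_add (fun r : ℝ => f (z + r • ν)) t 0
    _ = deriv (fun r : ℝ => f (z + r • ν)) t := by rw [add_zero]

lemma dirDeriv2_eq (f : ℂ → ℝ) (ν z : ℂ) :
    dirDeriv ν (dirDeriv ν f) z = deriv (deriv (fun t : ℝ => f (z + t • ν))) 0 := by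
  unfold dirDeriv
  congr 1
  funext t
  exact dirDeriv_line f ν z t

lemma flatLap_eq (f : ℂ → ℝ) (z : ℂ) :
    flatLaplacian f z = deriv (deriv (fun t : ℝ => f (z + t • (1:ℂ)))) 0
      + deriv (deriv (fun t : ℝ => f (z + t • Complex.I))) 0 := by
  unfold flatLaplacian
  rw [dirDeriv2_eq, dirDeriv2_eq]

open Filter Topology in
lemma second_deriv_nonpos {ψ : ℝ → ℝ} (hmax : IsLocalMax ψ 0)
    (h1 : ∀ᶠ t in 𝓝 (0:ℝ), DifferentiableAt ℝ ψ t)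
    (h2 : DifferentiableAt ℝ (deriv ψ) 0) : deriv (deriv ψ) 0 ≤ 0 := by
  by_contra hcon
  push_neg at hcon
  have h0 : deriv ψ 0 = 0 := hmax.deriv_eq_zero
  have hslope : Tendsto (slope (deriv ψ) 0) (𝓝[≠] 0) (𝓝 (deriv (deriv ψ) 0)) :=
    hasDerivAt_iff_tendsto_slope.1 h2.hasDerivAt
  have hpos : ∀ᶠ t in 𝓝[≠] (0:ℝ), 0 < slope (deriv ψ) 0 t :=
    hslope.eventually (eventually_gt_nhds hcon)
  rw [eventually_nhdsWithin_iff] at hpos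
  have hm : ∀ᶠ t in 𝓝 (0:ℝ), ψ t ≤ ψ 0 := hmax
  have H := (hpos.and (h1.and hm))
  obtain ⟨ε, hε, hP⟩ := Metric.eventually_nhds_iff_ball.mp H
  have hmem : ∀ t : ℝ, |t| < ε → (t ≠ 0 → 0 < slope (deriv ψ) 0 t)
      ∧ DifferentiableAt ℝ ψ t ∧ ψ t ≤ ψ 0 := by
    intro t ht
    have : t ∈ Metric.ball (0:ℝ) ε := by
      rw [Metric.mem_ball, Real.dist_eq, sub_zero]; exact ht
    have := hP t this
    exact ⟨fun h => this.1 h, this.2.1, this.2.2⟩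
  have hderivpos : ∀ t : ℝ, 0 < t → t < ε → 0 < deriv ψ t := by
    intro t ht0 htε
    have h := (hmem t (by rw [abs_of_pos ht0]; exact htε)).1 (ne_of_gt ht0)
    rw [slope_def_field] at h
    rw [h0, sub_zero, sub_zero] at h
    have := mul_pos h ht0
    rw [div_mul_cancel₀] at this
    · exact this
    · exact ne_of_gt ht0
  have hmono : StrictMonoOn ψ (Set.Icc 0 (ε / 2)) := by
    apply strictMonoOn_of_deriv_pos (convex_Icc _ _)
    · apply continuousOn_of_forall_continuousAt
      intro t ht
      have : |t| < ε := by
        rw [abs_of_nonneg ht.1]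
        linarith [ht.2]
      exact ((hmem t this).2.1).continuousAt
    · intro t ht
      rw [interior_Icc] at ht
      exact hderivpos t ht.1 (by linarith [ht.2])
  have hlt : ψ 0 < ψ (ε / 2) := by
    apply hmono (Set.left_mem_Icc.2 (by linarith)) (Set.right_mem_Icc.2 (by linarith))
    linarith
  have hle : ψ (ε / 2) ≤ ψ 0 := (hmem (ε / 2) (by rw [abs_of_pos (by linarith)]; linarith)).2.2
  linarith

open Filter Topology in
lemma nonpos_aux (R c : ℝ) (hR : 0 < R) (hc : 0 < c) (u : ℂ → ℝ)
    (hcont : ContinuousOn u (Metric.closedBall (0:ℂ) R))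
    (hbdry : ∀ z : ℂ, ‖z‖ = R → u z = 0)
    (hlap : ∀ z ∈ Metric.ball (0:ℂ) R, flatLaplacian u z = c ^ 2 * u z)
    (hreg : ∀ z ∈ Metric.ball (0:ℂ) R, ∀ ν : ℂ, (ν = 1 ∨ ν = Complex.I) →
      (∀ᶠ t in 𝓝 (0:ℝ), DifferentiableAt ℝ (fun s : ℝ => u (z + s • ν)) t) ∧
      DifferentiableAt ℝ (deriv (fun s : ℝ => u (z + s • ν))) 0) :
    ∀ z ∈ Metric.closedBall (0:ℂ) R, u z ≤ 0 := by
  intro z hz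
  by_contra hpos
  push_neg at hpos
  obtain ⟨z₀, hz₀mem, hmax⟩ := (isCompact_closedBall (0:ℂ) R).exists_isMaxOn ⟨z, hz⟩ hcont
  have hM : 0 < u z₀ := lt_of_lt_of_le hpos (hmax hz)
  have hz₀ : z₀ ∈ Metric.ball (0:ℂ) R := by
    rw [Metric.mem_ball]
    rcases lt_or_eq_of_le (Metric.mem_closedBall.1 hz₀mem) with h | h
    · exact h
    · exfalso
      have : ‖z₀‖ = R := by
        rw [← h, Complex.dist_eq, sub_zero]
      rw [hbdry z₀ this] at hM
      exact lt_irrefl 0 hM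
  -- local max along each line
  have hlocmax : ∀ ν : ℂ, IsLocalMax (fun t : ℝ => u (z₀ + t • ν)) 0 := by
    intro ν
    have hcl : Continuous (fun t : ℝ => z₀ + t • ν) := by continuity
    have hev : ∀ᶠ t in 𝓝 (0:ℝ), z₀ + t • ν ∈ Metric.ball (0:ℂ) R := by
      have h0 : z₀ + (0:ℝ) • ν = z₀ := by simp
      have := hcl.continuousAt (x := (0:ℝ))
      rw [ContinuousAt, h0] at this
      exact this.eventually_mem (Metric.isOpen_ball.mem_nhds hz₀)
    refine hev.mono fun t ht => ?_
    have : u (z₀ + t • ν) ≤ u z₀ := hmax (Metric.ball_subset_closedBall ht)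
    simpa using this
  have hkey : ∀ ν : ℂ, (ν = 1 ∨ ν = Complex.I) →
      deriv (deriv (fun t : ℝ => u (z₀ + t • ν))) 0 ≤ 0 := by
    intro ν hν
    obtain ⟨h1, h2⟩ := hreg z₀ hz₀ ν hν
    exact second_deriv_nonpos (hlocmax ν) h1 h2
  have hlap0 := hlap z₀ hz₀
  rw [flatLap_eq] at hlap0
  have hA := hkey 1 (Or.inl rfl)
  have hB := hkey Complex.I (Or.inr rfl)
  nlinarith [hlap0, hA, hB, hM, sq_nonneg c, mul_pos (mul_pos hc hc) hM]

lemma flatLap_neg (f : ℂ → ℝ) (z : ℂ) :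
    flatLaplacian (fun ζ => -f ζ) z = -flatLaplacian f z := by
  rw [flatLap_eq, flatLap_eq]
  have h : ∀ ν : ℂ, deriv (deriv (fun t : ℝ => -f (z + t • ν))) 0
      = -deriv (deriv (fun t : ℝ => f (z + t • ν))) 0 := by
    intro ν
    rw [show deriv (fun t : ℝ => -f (z + t • ν))
        = fun t => -(deriv (fun s : ℝ => f (z + s • ν)) t) from funext fun t => deriv.neg]
    exact deriv.neg
  rw [h 1, h Complex.I]; ring

lemma hasDerivAt_lineC (z ν : ℂ) (t : ℝ) :
    HasDerivAt (fun s : ℝ => z + s • ν) ν t := by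
  simpa using ((hasDerivAt_id t).smul_const ν).const_add z

open Filter Topology in
/-- the solution of the Dirichlet problem `Δw = c² w` on the disk
`{|z| < R}` with constant boundary value `m` is `w(z) = m · I₀(c|z|)/I₀(cR)`. -/
theorem statement5 (R c m : ℝ) (hR : 0 < R) (hc : 0 < c) (w : ℂ → ℝ)
    (hw_cont : ContinuousOn w (Metric.closedBall (0 : ℂ) R))
    (hw_C2 : ContDiffOn ℝ 2 w (Metric.ball (0 : ℂ) R))
    (hw_eq : ∀ z ∈ Metric.ball (0 : ℂ) R, flatLaplacian w z = c ^ 2 * w z)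
    (hw_bdry : ∀ z : ℂ, ‖z‖ = R → w z = m) :
    ∀ z ∈ Metric.closedBall (0 : ℂ) R,
      w z = m * besselI0 (c * ‖z‖) / besselI0 (c * R) := by
  set q : ℝ := c ^ 2 / 4 with hqdef
  have hq : 0 ≤ q := by positivity
  have hGR1 : 1 ≤ Gser q (R ^ 2) := one_le_Gser hq (by positivity)
  have hGR0 : Gser q (R ^ 2) ≠ 0 := by linarith
  set K : ℝ := m / Gser q (R ^ 2) with hKdef
  set v : ℂ → ℝ := fun ζ => K * Gser q (Complex.normSq ζ) with hvdef
  set u : ℂ → ℝ := fun ζ => w ζ - v ζ with hudef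
  have hvcont : Continuous v := by
    exact continuous_const.mul ((continuous_Gser hq).comp Complex.continuous_normSq)
  have hucont : ContinuousOn u (Metric.closedBall (0:ℂ) R) :=
    hw_cont.sub hvcont.continuousOn
  have hvbdry : ∀ ζ : ℂ, ‖ζ‖ = R → v ζ = m := by
    intro ζ hζ
    have hns : Complex.normSq ζ = R ^ 2 := by
      rw [← Complex.sq_norm, hζ]
    rw [hvdef]
    simp only
    rw [hns, hKdef]
    field_simp
  have hubdry : ∀ ζ : ℂ, ‖ζ‖ = R → u ζ = 0 := by
    intro ζ hζ
    rw [hudef]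
    simp only
    rw [hw_bdry ζ hζ, hvbdry ζ hζ, sub_self]
  -- regularity of w
  have hwd : ∀ ζ ∈ Metric.ball (0:ℂ) R, DifferentiableAt ℝ w ζ := fun ζ hζ =>
    (hw_C2.differentiableOn (by norm_num)).differentiableAt (Metric.isOpen_ball.mem_nhds hζ)
  have hFd : ∀ ν : ℂ, DifferentiableOn ℝ (fun ζ => fderiv ℝ w ζ ν) (Metric.ball (0:ℂ) R) := by
    intro ν
    have h1 : ContDiffOn ℝ 1 (fderiv ℝ w) (Metric.ball (0:ℂ) R) :=
      hw_C2.fderiv_of_isOpen Metric.isOpen_ball (by norm_num)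
    exact (h1.clm_apply contDiffOn_const).differentiableOn (by norm_num)
  have hline : ∀ (z ν : ℂ) (t : ℝ), z + t • ν ∈ Metric.ball (0:ℂ) R →
      HasDerivAt (fun s : ℝ => w (z + s • ν)) (fderiv ℝ w (z + t • ν) ν) t := by
    intro z ν t ht
    exact (hwd _ ht).hasFDerivAt.comp_hasDerivAt t (hasDerivAt_lineC z ν t)
  have hev : ∀ z ∈ Metric.ball (0:ℂ) R, ∀ ν : ℂ,
      ∀ᶠ t in 𝓝 (0:ℝ), z + t • ν ∈ Metric.ball (0:ℂ) R := by
    intro z hz ν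
    have hcl : Continuous (fun t : ℝ => z + t • ν) := by continuity
    have h0 : z + (0:ℝ) • ν = z := by simp
    have := hcl.continuousAt (x := (0:ℝ))
    rw [ContinuousAt, h0] at this
    exact this.eventually_mem (Metric.isOpen_ball.mem_nhds hz)
  have hFdiff0 : ∀ z ∈ Metric.ball (0:ℂ) R, ∀ ν : ℂ,
      DifferentiableAt ℝ (fun t : ℝ => fderiv ℝ w (z + t • ν) ν) 0 := by
    intro z hz ν
    have hF0 : DifferentiableAt ℝ (fun ζ => fderiv ℝ w ζ ν) z :=
      (hFd ν).differentiableAt (Metric.isOpen_ball.mem_nhds hz)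
    have hl : DifferentiableAt ℝ (fun t : ℝ => z + t • ν) 0 :=
      (hasDerivAt_lineC z ν 0).differentiableAt
    have hF0' : DifferentiableAt ℝ (fun ζ => fderiv ℝ w ζ ν) (z + (0:ℝ) • ν) := by
      simpa using hF0
    exact hF0'.comp (0:ℝ) hl
  -- eventual identity for deriv along lines of u
  have hueq : ∀ z ∈ Metric.ball (0:ℂ) R, ∀ ν : ℂ, Complex.normSq ν = 1 →
      deriv (fun s : ℝ => u (z + s • ν)) =ᶠ[𝓝 (0:ℝ)]
        fun t => fderiv ℝ w (z + t • ν) ν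
          - K * (Gser1 q (Complex.normSq (z + t • ν))
            * (2 * ((z.re * ν.re + z.im * ν.im) + t))) := by
    intro z hz ν hν
    refine (hev z hz ν).mono fun t ht => ?_
    exact ((hline z ν t ht).sub (hasDerivAt_vline q K hq z ν hν t)).deriv
  have hwdeq : ∀ z ∈ Metric.ball (0:ℂ) R, ∀ ν : ℂ,
      deriv (fun s : ℝ => w (z + s • ν)) =ᶠ[𝓝 (0:ℝ)]
        fun t => fderiv ℝ w (z + t • ν) ν := by
    intro z hz ν
    exact (hev z hz ν).mono fun t ht => (hline z ν t ht).deriv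
  have hreg : ∀ z ∈ Metric.ball (0:ℂ) R, ∀ ν : ℂ, (ν = 1 ∨ ν = Complex.I) →
      (∀ᶠ t in 𝓝 (0:ℝ), DifferentiableAt ℝ (fun s : ℝ => u (z + s • ν)) t) ∧
      DifferentiableAt ℝ (deriv (fun s : ℝ => u (z + s • ν))) 0 := by
    intro z hz ν hν
    have hν1 : Complex.normSq ν = 1 := by rcases hν with rfl | rfl <;> simp
    constructor
    · refine (hev z hz ν).mono fun t ht => ?_
      exact ((hline z ν t ht).sub (hasDerivAt_vline q K hq z ν hν1 t)).differentiableAt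
    · refine ((hueq z hz ν hν1).differentiableAt_iff).2 ?_
      exact (hFdiff0 z hz ν).sub (hasDerivAt_vline2 q K hq z ν hν1).differentiableAt
  have hulap : ∀ z ∈ Metric.ball (0:ℂ) R, flatLaplacian u z = c ^ 2 * u z := by
    intro z hz
    have hwl := hw_eq z hz
    rw [flatLap_eq] at hwl
    have hvl := flatLaplacian_v q K hq z
    rw [flatLap_eq] at hvl
    have hq4 : 4 * q = c ^ 2 := by rw [hqdef]; ring
    rw [hq4] at hvl
    rw [flatLap_eq]
    have hsplit : ∀ ν : ℂ, Complex.normSq ν = 1 →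
        deriv (deriv (fun t : ℝ => u (z + t • ν))) 0
          = deriv (deriv (fun t : ℝ => w (z + t • ν))) 0
            - deriv (deriv (fun t : ℝ => v (z + t • ν))) 0 := by
      intro ν hν1
      have e1 : deriv (deriv (fun t : ℝ => u (z + t • ν))) 0
          = deriv (fun t : ℝ => fderiv ℝ w (z + t • ν) ν
            - K * (Gser1 q (Complex.normSq (z + t • ν))
              * (2 * ((z.re * ν.re + z.im * ν.im) + t)))) 0 :=
        (hueq z hz ν hν1).deriv_eq
      have e2 : deriv (fun t : ℝ => fderiv ℝ w (z + t • ν) ν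
            - K * (Gser1 q (Complex.normSq (z + t • ν))
              * (2 * ((z.re * ν.re + z.im * ν.im) + t)))) 0
          = deriv (fun t : ℝ => fderiv ℝ w (z + t • ν) ν) 0
            - deriv (fun t : ℝ => K * (Gser1 q (Complex.normSq (z + t • ν))
              * (2 * ((z.re * ν.re + z.im * ν.im) + t)))) 0 :=
        deriv_sub (hFdiff0 z hz ν) (hasDerivAt_vline2 q K hq z ν hν1).differentiableAt
      have e3 : deriv (deriv (fun t : ℝ => w (z + t • ν))) 0
          = deriv (fun t : ℝ => fderiv ℝ w (z + t • ν) ν) 0 :=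
        (hwdeq z hz ν).deriv_eq
      have e4 : deriv (deriv (fun t : ℝ => v (z + t • ν))) 0
          = deriv (fun t : ℝ => K * (Gser1 q (Complex.normSq (z + t • ν))
              * (2 * ((z.re * ν.re + z.im * ν.im) + t)))) 0 := by
        have hfn : deriv (fun t : ℝ => v (z + t • ν))
            = fun t : ℝ => K * (Gser1 q (Complex.normSq (z + t • ν))
              * (2 * ((z.re * ν.re + z.im * ν.im) + t))) :=
          funext fun t => (hasDerivAt_vline q K hq z ν hν1 t).deriv
        rw [hfn]
      rw [e1, e2, e3, e4]
    rw [hsplit 1 (by simp), hsplit Complex.I (by simp)]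
    simp only [hudef, hvdef]
    linear_combination hwl - hvl
  have h1 := nonpos_aux R c hR hc u hucont hubdry hulap hreg
  have hlapneg : ∀ z ∈ Metric.ball (0:ℂ) R,
      flatLaplacian (fun ζ => -u ζ) z = c ^ 2 * (-u z) := by
    intro z hz
    rw [flatLap_neg u z, hulap z hz]
    ring
  have hregneg : ∀ z ∈ Metric.ball (0:ℂ) R, ∀ ν : ℂ, (ν = 1 ∨ ν = Complex.I) →
      (∀ᶠ t in 𝓝 (0:ℝ), DifferentiableAt ℝ (fun s : ℝ => -u (z + s • ν)) t) ∧
      DifferentiableAt ℝ (deriv (fun s : ℝ => -u (z + s • ν))) 0 := by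
    intro z hz ν hν
    obtain ⟨ha, hb⟩ := hreg z hz ν hν
    constructor
    · exact ha.mono fun t ht => ht.neg
    · rw [show deriv (fun s : ℝ => -u (z + s • ν))
          = fun t => -(deriv (fun s : ℝ => u (z + s • ν)) t) from funext fun t => deriv.neg]
      exact hb.neg
  have h2 := nonpos_aux R c hR hc (fun ζ => -u ζ) hucont.neg
    (fun ζ hζ => by show -u ζ = 0; rw [hubdry ζ hζ]; ring) hlapneg hregneg
  intro z hz
  have e1 := h1 z hz
  have e2 := h2 z hz
  have huz : u z = 0 := le_antisymm e1 (by linarith)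
  have hwz : w z = K * Gser q (Complex.normSq z) := by
    simp only [hudef, hvdef] at huz
    linarith
  have hb1 : besselI0 (c * ‖z‖) = Gser q (Complex.normSq z) := by
    rw [besselI0_eq_Gser, Complex.sq_norm, ← hqdef]
  have hb2 : besselI0 (c * R) = Gser q (R ^ 2) := by
    rw [besselI0_eq_Gser, ← hqdef]
  rw [hb1, hb2, hwz, hKdef]
  ring
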